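/- Let G be a group with subgroups A, B ≤ G such that B normalizes A, A ∩ B = {e}, and G = AB (inner semidirect product G = [AB]), and let φ_A : G → A assign to each g ∈ G the unique a ∈ A with g ∈ aB. Then for every atomic subset S ⊆ G, the image φ_A(⟨S⟩) = { a ∈ A : ∃ g ∈ ⟨S⟩, ∃ b ∈ B, g = a·b } equals ⟨S⟩ ∩ A. -/

import Mathlib

/-- Let `G = [AB]` be an inner semidirect product of subgroups `A, B ≤ G`,
and let `φ_A : G → A` assign to each `g` the unique `a ∈ A` with `g ∈ aB`.  Then for every
atomic subset `S ⊆ G`, the image `φ_A(⟨S⟩) = { a ∈ A | ∃ g ∈ ⟨S⟩, ∃ b ∈ B, g = a·b }`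
equals `⟨S⟩ ∩ A`. -/
theorem stmt_2 {G : Type*} [Group G] (A B : Subgroup G)
    (hnorm : B ≤ Subgroup.normalizer (A : Set G))
    (hint : A ⊓ B = ⊥)
    (hprod : ∀ g : G, ∃ a ∈ A, ∃ b ∈ B, g = a * b)
    (S : Set G) (hS : S ⊆ (A : Set G) ∪ (B : Set G)) :
    {a : G | a ∈ A ∧ ∃ g ∈ Subgroup.closure S, ∃ b ∈ B, g = a * b} =
      ((Subgroup.closure S ⊓ A : Subgroup G) : Set G) := by
  -- Key claim: every element of ⟨S⟩ factors with both factors in ⟨S⟩.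
  have key : ∀ g ∈ Subgroup.closure S,
      ∃ a, (a ∈ Subgroup.closure S ∧ a ∈ A) ∧
        ∃ b, (b ∈ Subgroup.closure S ∧ b ∈ B) ∧ g = a * b := by
    intro g hg
    induction hg using Subgroup.closure_induction with
    | mem x hx =>
        rcases hS hx with h | h
        · exact ⟨x, ⟨Subgroup.subset_closure hx, h⟩, 1, ⟨one_mem _, one_mem _⟩,
            (mul_one x).symm⟩
        · exact ⟨1, ⟨one_mem _, one_mem _⟩, x, ⟨Subgroup.subset_closure hx, h⟩,
            (one_mul x).symm⟩
    | one => exact ⟨1, ⟨one_mem _, one_mem _⟩, 1, ⟨one_mem _, one_mem _⟩, (one_mul 1).symm⟩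
    | mul x y hx hy ihx ihy =>
        obtain ⟨a, ⟨haS, haA⟩, b, ⟨hbS, hbB⟩, rfl⟩ := ihx
        obtain ⟨a', ⟨ha'S, ha'A⟩, b', ⟨hb'S, hb'B⟩, rfl⟩ := ihy
        refine ⟨a * (b * a' * b⁻¹), ⟨?_, ?_⟩, b * b', ⟨mul_mem hbS hb'S, mul_mem hbB hb'B⟩, ?_⟩
        · exact mul_mem haS (mul_mem (mul_mem hbS ha'S) (inv_mem hbS))
        · exact mul_mem haA ((Subgroup.mem_normalizer_iff.mp (hnorm hbB) a').mp ha'A)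
        · group
    | inv x hx ihx =>
        obtain ⟨a, ⟨haS, haA⟩, b, ⟨hbS, hbB⟩, rfl⟩ := ihx
        refine ⟨b⁻¹ * a⁻¹ * b, ⟨?_, ?_⟩, b⁻¹, ⟨inv_mem hbS, inv_mem hbB⟩, ?_⟩
        · exact mul_mem (mul_mem (inv_mem hbS) (inv_mem haS)) hbS
        · have := (Subgroup.mem_normalizer_iff.mp (hnorm (inv_mem hbB)) a⁻¹).mp (inv_mem haA)
          simpa using this
        · group
  ext a
  simp only [Set.mem_setOf_eq, SetLike.mem_coe, Subgroup.mem_inf]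
  constructor
  · rintro ⟨haA, g, hg, b, hbB, rfl⟩
    obtain ⟨a', ⟨ha'S, ha'A⟩, b', ⟨-, hb'B⟩, heq⟩ := key _ hg
    -- uniqueness: a = a'
    have h2 : a'⁻¹ * a = b' * b⁻¹ := by
      have h3 : a'⁻¹ * (a * b) = b' := by rw [heq]; group
      rw [← h3]; group
    have hmem : a'⁻¹ * a ∈ A ⊓ B := by
      refine Subgroup.mem_inf.mpr ⟨A.mul_mem (A.inv_mem ha'A) haA, ?_⟩
      rw [h2]; exact B.mul_mem hb'B (B.inv_mem hbB)
    rw [hint, Subgroup.mem_bot, inv_mul_eq_one, eq_comm] at hmem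
    exact ⟨hmem ▸ ha'S, haA⟩
  · rintro ⟨haS, haA⟩
    exact ⟨haA, a, haS, 1, one_mem _, (mul_one a).symm⟩
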